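/- Let m ≥ 6 and ℓ be integers with 1 ≤ ℓ ≤ m − 4. Then the sum of generalized m-gonal numbers f(x₁,…,x_{ℓ−1}, y₁,…,y_m, z) = ∑_{j=1}^{ℓ−1} P_m(x_j) + (ℓ+1)·∑_{j=1}^{m} P_m(y_j) + (2ℓ+1)·P_m(z) represents every nonnegative integer except ℓ; that is, for every nonnegative integer k ≠ ℓ there exist integers x_j, y_j, z with f = k, and there is no integer choice of the variables with f = ℓ. -/

import Mathlib

def polygonal (m x : ℤ) : ℤ := ((m - 2) * x ^ 2 - (m - 4) * x) / 2

namespace AE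

/-- triangular-like numbers `x(x-1)/2` -/
def tri (x : ℤ) : ℤ := x * (x - 1) / 2

lemma two_tri (x : ℤ) : 2 * tri x = x * (x - 1) := by
  have h : (2:ℤ) ∣ x * (x - 1) := by
    rcases Int.even_or_odd x with h | h
    · exact Dvd.dvd.mul_right h.two_dvd _
    · exact Dvd.dvd.mul_left (by simpa using (h.sub_odd odd_one).two_dvd) _
  rw [tri, Int.mul_ediv_cancel' h]

lemma poly_eq (m x : ℤ) : polygonal m x = (m - 2) * tri x + x := by
  have h2 : (2:ℤ) ≠ 0 := two_ne_zero
  have : (m - 2) * x ^ 2 - (m - 4) * x = 2 * ((m - 2) * tri x + x) := by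
    have h := two_tri x
    linear_combination (2 - m) * h
  rw [polygonal, this, Int.mul_ediv_cancel_left _ h2]

lemma poly_zero (m : ℤ) : polygonal m 0 = 0 := by simp [poly_eq, tri]

lemma poly_one (m : ℤ) : polygonal m 1 = 1 := by simp [poly_eq, tri]

lemma poly_two (m : ℤ) : polygonal m 2 = m := by
  have : tri 2 = 1 := by norm_num [tri]
  rw [poly_eq, this]; ring

lemma poly_neg_one (m : ℤ) : polygonal m (-1) = m - 3 := by
  have : tri (-1) = 1 := by norm_num [tri]
  rw [poly_eq, this]; ring

lemma tri_nonneg (x : ℤ) : 0 ≤ tri x := by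
  have h := two_tri x
  rcases le_or_gt 1 x with h1 | h1
  · nlinarith
  · nlinarith

lemma poly_nonneg {m : ℤ} (hm : 4 ≤ m) (x : ℤ) : 0 ≤ polygonal m x := by
  have ht := tri_nonneg x
  have h2t := two_tri x
  rw [poly_eq]
  rcases le_or_gt 1 x with h1 | h1
  · nlinarith
  · nlinarith

/-- Eisenstein-type binary quadratic form -/
def Qf (a b : ℤ) : ℤ := a ^ 2 + a * b + b ^ 2

lemma Qf_nonneg (a b : ℤ) : 0 ≤ Qf a b := by unfold Qf; nlinarith [sq_nonneg (2*a+b), sq_nonneg b]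

lemma Qf_eq_zero {a b : ℤ} (h : Qf a b = 0) : a = 0 ∧ b = 0 := by
  unfold Qf at h
  constructor <;> nlinarith [sq_nonneg (2*a+b), sq_nonneg b, sq_nonneg a, sq_nonneg (a+2*b)]

/-- rounding: reduce a vector mod n with small Qf value -/
lemma Qf_round (n u v : ℤ) (hn : 0 < n) :
    ∃ a b : ℤ, 16 * Qf (u - n * a) (v - n * b) ≤ 7 * n ^ 2 := by
  obtain ⟨b, hb1, hb2⟩ : ∃ b : ℤ, -n ≤ 2 * (v - n * b) ∧ 2 * (v - n * b) < n := by
    refine ⟨(2 * v + n) / (2 * n), ?_, ?_⟩ <;>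
    · have h1 := Int.emod_nonneg (2 * v + n) (by positivity : (2*n : ℤ) ≠ 0)
      have h2 := Int.emod_lt_of_pos (2 * v + n) (by positivity : (0:ℤ) < 2*n)
      have he := Int.mul_ediv_add_emod (2 * v + n) (2 * n)
      have hm : 2 * (n * ((2 * v + n) / (2 * n))) = 2 * n * ((2 * v + n) / (2 * n)) := by ring
      omega
  set v' := v - n * b with hv'
  obtain ⟨a, ha1, ha2⟩ : ∃ a : ℤ, -n ≤ 2 * (u - n * a) + v' ∧ 2 * (u - n * a) + v' < n := by
    refine ⟨(2 * u + v' + n) / (2 * n), ?_, ?_⟩ <;>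
    · have h1 := Int.emod_nonneg (2 * u + v' + n) (by positivity : (2*n : ℤ) ≠ 0)
      have h2 := Int.emod_lt_of_pos (2 * u + v' + n) (by positivity : (0:ℤ) < 2*n)
      have he := Int.mul_ediv_add_emod (2 * u + v' + n) (2 * n)
      have hm : 2 * (n * ((2 * u + v' + n) / (2 * n))) = 2 * n * ((2 * u + v' + n) / (2 * n)) := by ring
      omega
  refine ⟨a, b, ?_⟩
  set u' := u - n * a with hu'
  have h1 : (2 * u' + v') ^ 2 ≤ n ^ 2 := by nlinarith
  have h2 : (2 * v') ^ 2 ≤ n ^ 2 := by nlinarith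
  have key : 16 * Qf u' v' = 4 * (2 * u' + v') ^ 2 + 3 * (2 * v') ^ 2 := by unfold Qf; ring
  show 16 * Qf u' v' ≤ 7 * n ^ 2
  rw [key]; linarith

/-- quaternion-style multiplication giving composition for `Qf ⊕ Qf` -/
def B1 (a1 a2 b1 b2 c1 c2 d1 d2 : ℤ) : ℤ := a1*c1 + a1*c2 + a2*c2 + b1*d1 + b1*d2 + b2*d2
def B2 (a1 a2 b1 b2 c1 c2 d1 d2 : ℤ) : ℤ := a2*c1 - a1*c2 + b2*d1 - b1*d2
def B3 (a1 a2 b1 b2 c1 c2 d1 d2 : ℤ) : ℤ := b1*c1 - b2*c2 - a1*d1 + a2*d2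
def B4 (a1 a2 b1 b2 c1 c2 d1 d2 : ℤ) : ℤ := b1*c2 + b2*c1 + b2*c2 - a1*d2 - a2*d1 - a2*d2

lemma norm_B (a1 a2 b1 b2 c1 c2 d1 d2 : ℤ) :
    Qf (B1 a1 a2 b1 b2 c1 c2 d1 d2) (B2 a1 a2 b1 b2 c1 c2 d1 d2)
      + Qf (B3 a1 a2 b1 b2 c1 c2 d1 d2) (B4 a1 a2 b1 b2 c1 c2 d1 d2)
      = (Qf a1 a2 + Qf b1 b2) * (Qf c1 c2 + Qf d1 d2) := by
  unfold Qf B1 B2 B3 B4; ring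
open Polynomial in
lemma zmod_sol (p : ℕ) (hp : p.Prime) (h5 : 5 ≤ p) :
    ∃ x y : ℤ, (p : ℤ) ∣ x ^ 2 + x * y + y ^ 2 + 1 := by
  haveI : Fact p.Prime := ⟨hp⟩
  have hodd : Fintype.card (ZMod p) % 2 = 1 := by
    rw [ZMod.card]; exact hp.eq_two_or_odd.resolve_left (by omega)
  have h3 : (3 : ZMod p) ≠ 0 := by
    have : ¬ ((p:ℤ) ∣ (3:ℤ)) := by
      intro h; have := Int.le_of_dvd (by norm_num) h; omega
    intro hc
    exact this (by exact_mod_cast (ZMod.intCast_zmod_eq_zero_iff_dvd 3 p).mp (by exact_mod_cast hc))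
  have hdegf : degree (X ^ 2 : (ZMod p)[X]) = 2 := degree_X_pow 2
  have hdegg : degree (C (3 : ZMod p) * X ^ 2 + C 4) = 2 := by
    rw [degree_add_eq_left_of_degree_lt]
    · exact degree_C_mul_X_pow 2 h3
    · rw [degree_C_mul_X_pow 2 h3]
      exact lt_of_le_of_lt (degree_C_le) (by norm_num)
  obtain ⟨u, v, huv⟩ := FiniteField.exists_root_sum_quadratic hdegf hdegg hodd
  have huv' : u ^ 2 + (3 * v ^ 2 + 4) = 0 := by simpa using huv
  -- pass to x, y with x^2+xy+y^2 = -1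
  have h2 : (2 : ZMod p) ≠ 0 := by
    have : ¬ ((p:ℤ) ∣ (2:ℤ)) := by
      intro h; have := Int.le_of_dvd (by norm_num) h; omega
    intro hc
    exact this (by exact_mod_cast (ZMod.intCast_zmod_eq_zero_iff_dvd 2 p).mp (by exact_mod_cast hc))
  set x : ZMod p := (u - v) * 2⁻¹ with hxdef
  set y : ZMod p := v with hydef
  have h2x : 2 * x + y = u := by
    rw [hxdef, hydef]
    field_simp
    ring
  have h4 : (4 : ZMod p) ≠ 0 := by
    have : (4 : ZMod p) = 2 * 2 := by norm_num
    rw [this]; exact mul_ne_zero h2 h2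
  have hkey : (4 : ZMod p) * (x ^ 2 + x * y + y ^ 2 + 1) = 0 := by
    have : (4 : ZMod p) * (x ^ 2 + x * y + y ^ 2 + 1) = (2*x + y)^2 + 3*y^2 + 4 := by ring
    rw [this, h2x, hydef]
    linear_combination huv'
  have hzero : (x ^ 2 + x * y + y ^ 2 + 1 : ZMod p) = 0 :=
    (mul_eq_zero.mp hkey).resolve_left h4
  refine ⟨(x.val : ℤ), (y.val : ℤ), ?_⟩
  rw [← ZMod.intCast_zmod_eq_zero_iff_dvd]
  push_cast
  rw [ZMod.natCast_val, ZMod.natCast_val, ZMod.cast_id, ZMod.cast_id]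
  exact hzero

lemma Bself (a1 a2 b1 b2 : ℤ) :
    B1 a1 a2 b1 b2 a1 a2 b1 b2 = Qf a1 a2 + Qf b1 b2
      ∧ B2 a1 a2 b1 b2 a1 a2 b1 b2 = 0
      ∧ B3 a1 a2 b1 b2 a1 a2 b1 b2 = 0
      ∧ B4 a1 a2 b1 b2 a1 a2 b1 b2 = 0 := by
  refine ⟨?_, ?_, ?_, ?_⟩ <;> simp only [B1, B2, B3, B4, Qf] <;> ring

lemma descent (M : ℕ) : 1 ≤ M → ∀ p : ℕ, p.Prime → M < p →
    (∃ a b c d : ℤ, Qf a b + Qf c d = M * p) → ∃ a b c d : ℤ, Qf a b + Qf c d = p := by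
  induction M using Nat.strong_induction_on with
  | _ M ih =>
    intro hM p hp hMp ⟨x1, x2, y1, y2, hx⟩
    rcases eq_or_lt_of_le hM with h1 | h2
    · exact ⟨x1, x2, y1, y2, by rw [hx, ← h1]; push_cast; ring⟩
    -- 2 ≤ M
    have hM0 : (0:ℤ) < (M:ℤ) := by exact_mod_cast Nat.lt_of_lt_of_le Nat.zero_lt_one hM
    obtain ⟨c1, c2, hc12⟩ := Qf_round (M:ℤ) x1 x2 hM0
    obtain ⟨c3, c4, hc34⟩ := Qf_round (M:ℤ) y1 y2 hM0
    set δ1 := x1 - (M:ℤ) * c1 with hd1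
    set δ2 := x2 - (M:ℤ) * c2 with hd2
    set δ3 := y1 - (M:ℤ) * c3 with hd3
    set δ4 := y2 - (M:ℤ) * c4 with hd4
    have hVd_lt : Qf δ1 δ2 + Qf δ3 δ4 < (M:ℤ)^2 := by nlinarith
    have hVd_ge : 0 ≤ Qf δ1 δ2 + Qf δ3 δ4 := by
      have := Qf_nonneg δ1 δ2; have := Qf_nonneg δ3 δ4; omega
    have hdvd : (M:ℤ) ∣ Qf δ1 δ2 + Qf δ3 δ4 := by
      refine ⟨(p : ℤ) - ((2*c1*x1 + c1*x2 + c2*x1 + 2*c2*x2 - (M:ℤ)*(c1^2+c1*c2+c2^2))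
        + (2*c3*y1 + c3*y2 + c4*y1 + 2*c4*y2 - (M:ℤ)*(c3^2+c3*c4+c4^2))), ?_⟩
      rw [hd1, hd2, hd3, hd4]
      unfold Qf
      unfold Qf at hx
      linear_combination hx
    obtain ⟨r, hr⟩ := hdvd
    have hr_lt : r < (M:ℤ) := by nlinarith
    have hr_ge : 0 ≤ r := by nlinarith
    rcases eq_or_lt_of_le hr_ge with hr0 | hr1
    · -- r = 0 : contradiction with primality
      exfalso
      have h0 : Qf δ1 δ2 + Qf δ3 δ4 = 0 := by rw [hr, ← hr0]; ring
      have hq1 : Qf δ1 δ2 = 0 := by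
        have := Qf_nonneg δ1 δ2; have := Qf_nonneg δ3 δ4; omega
      have hq2 : Qf δ3 δ4 = 0 := by
        have := Qf_nonneg δ1 δ2; have := Qf_nonneg δ3 δ4; omega
      obtain ⟨e1, e2⟩ := Qf_eq_zero hq1
      obtain ⟨e3, e4⟩ := Qf_eq_zero hq2
      have hx1 : x1 = (M:ℤ) * c1 := by omega
      have hx2 : x2 = (M:ℤ) * c2 := by omega
      have hy1 : y1 = (M:ℤ) * c3 := by omega
      have hy2 : y2 = (M:ℤ) * c4 := by omega
      have : (M:ℤ) * p = (M:ℤ)^2 * (Qf c1 c2 + Qf c3 c4) := by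
        rw [← hx]; rw [hx1, hx2, hy1, hy2]; unfold Qf; ring
      have hMp' : (M:ℤ) ∣ (p:ℤ) := by
        refine ⟨Qf c1 c2 + Qf c3 c4, ?_⟩
        have hMne : (M:ℤ) ≠ 0 := by omega
        exact mul_left_cancel₀ hMne (by rw [this]; ring)
      have : M ∣ p := Int.ofNat_dvd.mp (by exact_mod_cast hMp')
      rcases (Nat.Prime.eq_one_or_self_of_dvd hp M this) with h | h <;> omega
    · -- 1 ≤ r : descend
      set η1 := (p:ℤ) - B1 x1 x2 y1 y2 c1 c2 c3 c4 with he1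
      set η2 := - B2 x1 x2 y1 y2 c1 c2 c3 c4 with he2
      set η3 := - B3 x1 x2 y1 y2 c1 c2 c3 c4 with he3
      set η4 := - B4 x1 x2 y1 y2 c1 c2 c3 c4 with he4
      have hb1 : B1 x1 x2 y1 y2 δ1 δ2 δ3 δ4 = (M:ℤ) * η1 := by
        rw [he1, hd1, hd2, hd3, hd4]; unfold B1; unfold Qf at hx; linear_combination hx
      have hb2 : B2 x1 x2 y1 y2 δ1 δ2 δ3 δ4 = (M:ℤ) * η2 := by
        rw [he2, hd1, hd2, hd3, hd4]; unfold B2; ring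
      have hb3 : B3 x1 x2 y1 y2 δ1 δ2 δ3 δ4 = (M:ℤ) * η3 := by
        rw [he3, hd1, hd2, hd3, hd4]; unfold B3; ring
      have hb4 : B4 x1 x2 y1 y2 δ1 δ2 δ3 δ4 = (M:ℤ) * η4 := by
        rw [he4, hd1, hd2, hd3, hd4]; unfold B4; ring
      have hnorm := norm_B x1 x2 y1 y2 δ1 δ2 δ3 δ4
      rw [hb1, hb2, hb3, hb4, hx, hr] at hnorm
      have hMsq : (M:ℤ)^2 ≠ 0 := by positivity
      have hfin : Qf η1 η2 + Qf η3 η4 = r * p := by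
        have expand : Qf ((M:ℤ)*η1) ((M:ℤ)*η2) + Qf ((M:ℤ)*η3) ((M:ℤ)*η4)
            = (M:ℤ)^2 * (Qf η1 η2 + Qf η3 η4) := by unfold Qf; ring
        rw [expand] at hnorm
        have : (M:ℤ)^2 * (Qf η1 η2 + Qf η3 η4) = (M:ℤ)^2 * (r * p) := by
          rw [hnorm]; ring
        exact mul_left_cancel₀ hMsq this
      have hrnat : r.toNat < M := by omega
      have hrnat1 : 1 ≤ r.toNat := by omega
      refine ih r.toNat hrnat hrnat1 p hp (by omega) ⟨η1, η2, η3, η4, ?_⟩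
      rw [hfin]
      have : ((r.toNat : ℤ)) = r := Int.toNat_of_nonneg hr_ge
      rw [this]

lemma prime_rep (p : ℕ) (hp : p.Prime) : ∃ a b c d : ℤ, Qf a b + Qf c d = p := by
  rcases eq_or_ne p 2 with h2 | h2
  · exact ⟨1, 0, 1, 0, by subst h2; unfold Qf; norm_num⟩
  rcases eq_or_ne p 3 with h3 | h3
  · exact ⟨1, 1, 0, 0, by subst h3; unfold Qf; norm_num⟩
  have h5 : 5 ≤ p := by
    by_contra hlt
    push_neg at hlt
    have := hp.two_le
    interval_cases p
    · exact h2 rfl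
    · exact h3 rfl
    · exact absurd hp (by norm_num)
  obtain ⟨x, y, hxy⟩ := zmod_sol p hp h5
  have hp0 : (0:ℤ) < (p:ℤ) := by exact_mod_cast hp.pos
  obtain ⟨a, b, hab⟩ := Qf_round (p:ℤ) x y hp0
  set x' := x - (p:ℤ) * a with hx'
  set y' := y - (p:ℤ) * b with hy'
  have hdvd : (p:ℤ) ∣ Qf x' y' + 1 := by
    obtain ⟨t, ht⟩ := hxy
    refine ⟨t - (2*a*x + a*y + b*x + 2*b*y - (p:ℤ)*(a^2+a*b+b^2)), ?_⟩
    rw [hx', hy']; unfold Qf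
    linear_combination ht
  obtain ⟨mm, hmm⟩ := hdvd
  have hq := Qf_nonneg x' y'
  have hmm1 : 1 ≤ mm := by nlinarith
  have hmmp : mm < p := by nlinarith
  refine descent mm.toNat (by omega) p hp (by omega) ⟨x', y', 1, 0, ?_⟩
  have h1 : Qf 1 0 = 1 := by unfold Qf; norm_num
  rw [h1, hmm]
  have : ((mm.toNat : ℤ)) = mm := Int.toNat_of_nonneg (by omega)
  rw [this]; ring

theorem Qf_univ (n : ℕ) : ∃ a b c d : ℤ, Qf a b + Qf c d = n := by
  induction n using Nat.strong_induction_on with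
  | _ n ih =>
    rcases Nat.lt_or_ge n 2 with h | h
    · interval_cases n
      · exact ⟨0, 0, 0, 0, by unfold Qf; norm_num⟩
      · exact ⟨1, 0, 0, 0, by unfold Qf; norm_num⟩
    · obtain ⟨p, hp, hdvd⟩ := Nat.exists_prime_and_dvd (show n ≠ 1 by omega)
      obtain ⟨j, hj⟩ := hdvd
      have hj1 : 1 ≤ j := by
        rcases Nat.eq_zero_or_pos j with h0 | h0
        · subst h0; simp at hj; omega
        · exact h0
      have hjn : j < n := by
        have h2j : 2 * j ≤ p * j := Nat.mul_le_mul_right j hp.two_le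
        linarith [hj, hj1, h2j]
      obtain ⟨a1, a2, b1, b2, hab⟩ := prime_rep p hp
      obtain ⟨c1, c2, d1, d2, hcd⟩ := ih j hjn
      refine ⟨B1 a1 a2 b1 b2 c1 c2 d1 d2, B2 a1 a2 b1 b2 c1 c2 d1 d2,
        B3 a1 a2 b1 b2 c1 c2 d1 d2, B4 a1 a2 b1 b2 c1 c2 d1 d2, ?_⟩
      rw [norm_B, hab, hcd, hj]
      push_cast; ring

theorem Qf_univ_int (K : ℤ) (hK : 0 ≤ K) : ∃ a b c d : ℤ, Qf a b + Qf c d = K := by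
  obtain ⟨a, b, c, d, h⟩ := Qf_univ K.toNat
  exact ⟨a, b, c, d, by rw [h, Int.toNat_of_nonneg hK]⟩


/-! ### sums of a fixed number of generalized polygonal numbers -/

def Rep (mz : ℤ) (n : ℕ) (S : ℤ) : Prop := ∃ y : Fin n → ℤ, (∑ j, polygonal mz (y j)) = S

lemma rep_zero (mz : ℤ) : Rep mz 0 0 := ⟨fun _ => 0, by simp⟩

lemma rep_cons {mz : ℤ} {n : ℕ} {S : ℤ} (v : ℤ) (h : Rep mz n S) :
    Rep mz (n + 1) (polygonal mz v + S) := by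
  obtain ⟨y, hy⟩ := h
  refine ⟨Fin.cons v y, ?_⟩
  rw [Fin.sum_univ_succ]
  simp only [Fin.cons_zero, Fin.cons_succ]
  rw [hy]

lemma rep_congr {mz : ℤ} {n : ℕ} {S S' : ℤ} (h : S = S') (hr : Rep mz n S) : Rep mz n S' :=
  h ▸ hr

lemma rep_castn {mz : ℤ} {n n' : ℕ} {S : ℤ} (h : n = n') (hr : Rep mz n S) : Rep mz n' S :=
  h ▸ hr

lemma rep_append {mz : ℤ} {n1 n2 : ℕ} {S1 S2 : ℤ} (h1 : Rep mz n1 S1) (h2 : Rep mz n2 S2) :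
    Rep mz (n1 + n2) (S1 + S2) := by
  obtain ⟨y1, hy1⟩ := h1
  obtain ⟨y2, hy2⟩ := h2
  refine ⟨Fin.addCases y1 y2, ?_⟩
  rw [Fin.sum_univ_add]
  simp only [Fin.addCases_left, Fin.addCases_right]
  rw [hy1, hy2]

lemma rep_ones (mz : ℤ) : ∀ (n : ℕ) (t : ℤ), 0 ≤ t → t ≤ (n : ℤ) → Rep mz n t := by
  intro n
  induction n with
  | zero => intro t h1 h2; norm_num at h2; have : t = 0 := le_antisymm h2 h1
            exact this ▸ rep_zero mz
  | succ n ih =>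
    intro t h1 h2
    by_cases h : t ≤ (n : ℤ)
    · have := rep_cons 0 (ih t h1 h)
      exact rep_congr (by rw [poly_zero]; ring) this
    · push_neg at h
      have ht : t - 1 ≤ (n : ℤ) := by push_cast at h2; omega
      have := rep_cons 1 (ih (t - 1) (by omega) ht)
      exact rep_congr (by rw [poly_one]; ring) this

/-! ### the three-variable gadgets -/

lemma tri_g0 (a b : ℤ) : tri a + tri b + tri (-a - b) = Qf a b := by
  have h1 := two_tri a; have h2 := two_tri b; have h3 := two_tri (-a - b)
  have key : 2 * (tri a + tri b + tri (-a - b)) = 2 * Qf a b := by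
    unfold Qf; linear_combination h1 + h2 + h3
  omega

lemma tri_g1 (a b : ℤ) : tri (a + 1) + tri (b + 1) + tri (1 - a - b) = Qf a b := by
  have h1 := two_tri (a + 1); have h2 := two_tri (b + 1); have h3 := two_tri (1 - a - b)
  have key : 2 * (tri (a + 1) + tri (b + 1) + tri (1 - a - b)) = 2 * Qf a b := by
    unfold Qf; linear_combination h1 + h2 + h3
  omega

lemma tri_gm1 (a b : ℤ) : tri (a - 1) + tri (b - 1) + tri (-1 - a - b) = Qf a b + 3 := by
  have h1 := two_tri (a - 1); have h2 := two_tri (b - 1); have h3 := two_tri (-1 - a - b)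
  have key : 2 * (tri (a - 1) + tri (b - 1) + tri (-1 - a - b)) = 2 * (Qf a b + 3) := by
    unfold Qf; linear_combination h1 + h2 + h3
  omega

lemma rep_g0 (mz a b : ℤ) : Rep mz 3 ((mz - 2) * Qf a b) := by
  have h := rep_cons a (rep_cons b (rep_cons (-a - b) (rep_zero mz)))
  refine rep_congr ?_ h
  rw [poly_eq, poly_eq, poly_eq]
  linear_combination (mz - 2) * tri_g0 a b

lemma rep_g1 (mz a b : ℤ) : Rep mz 3 ((mz - 2) * Qf a b + 3) := by
  have h := rep_cons (a + 1) (rep_cons (b + 1) (rep_cons (1 - a - b) (rep_zero mz)))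
  refine rep_congr ?_ h
  rw [poly_eq, poly_eq, poly_eq]
  linear_combination (mz - 2) * tri_g1 a b

lemma rep_gm1 (mz a b : ℤ) : Rep mz 3 ((mz - 2) * Qf a b + 3 * (mz - 2) - 3) := by
  have h := rep_cons (a - 1) (rep_cons (b - 1) (rep_cons (-1 - a - b) (rep_zero mz)))
  refine rep_congr ?_ h
  rw [poly_eq, poly_eq, poly_eq]
  linear_combination (mz - 2) * tri_gm1 a b

lemma rep_assemble {m : ℕ} (hm : 6 ≤ m) {G1 G2 T : ℤ}
    (h1 : Rep (m : ℤ) 3 G1) (h2 : Rep (m : ℤ) 3 G2) (hT0 : 0 ≤ T) (hTm : T ≤ (m : ℤ) - 6) :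
    Rep (m : ℤ) m (G1 + G2 + T) := by
  have hT' : T ≤ ((m - 6 : ℕ) : ℤ) := by omega
  have h3 := rep_ones (m : ℤ) (m - 6) T hT0 hT'
  have h := rep_append h1 (rep_append h2 h3)
  refine rep_castn (by omega) (rep_congr (by ring) h)

/-! ### every nonnegative integer is a sum of m generalized m-gonal numbers -/

theorem rep_univ (m : ℕ) (hm : 6 ≤ m) (S : ℤ) (hS : 0 ≤ S) : Rep (m : ℤ) m S := by
  set mz : ℤ := (m : ℤ) with hmz
  have hmz6 : (6 : ℤ) ≤ mz := by rw [hmz]; exact_mod_cast hm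
  have hq := Int.mul_ediv_add_emod S (mz - 2)
  have hr0 : 0 ≤ S % (mz - 2) := Int.emod_nonneg S (by omega)
  have hrlt : S % (mz - 2) < mz - 2 := Int.emod_lt_of_pos S (by omega)
  set q : ℤ := S / (mz - 2) with hqdef
  set r : ℤ := S % (mz - 2) with hrdef
  have hS_eq : S = (mz - 2) * q + r := by omega
  have hq0 : 0 ≤ q := by
    rcases le_or_gt 0 q with h | h
    · exact h
    · exfalso; nlinarith
  rcases lt_or_ge S (4 * mz - 4) with hsmall | hlarge
  · -- small case : S = c * m + a * (m - 3) + t, with c + a + t ≤ m slots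
    have hq4 : q ≤ 4 := by nlinarith
    obtain ⟨c, hc0, hcq, ht0, hslots'⟩ :
        ∃ c : ℤ, 0 ≤ c ∧ c ≤ q ∧ 0 ≤ r + q - 3 * c ∧ c + (q - c) + (r + q - 3 * c) ≤ mz := by
      by_cases hcase : (q + r) / 3 ≤ q
      · exact ⟨(q + r) / 3, by omega, hcase, by omega, by omega⟩
      · exact ⟨q, by omega, le_refl q, by omega, by omega⟩
    set a : ℤ := q - c with hadef
    set t : ℤ := r + q - 3 * c with htdef
    have hslots : c + a + t ≤ mz := by rw [hadef, htdef]; exact hslots'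
    -- counts as naturals
    have hvalue : c * mz + a * (mz - 3) + t * 1 = S := by
      rw [hadef, htdef, hS_eq]; ring
    set cn := c.toNat with hcn
    set an := a.toNat with han
    set tn := t.toNat with htn
    have hc' : (cn : ℤ) = c := Int.toNat_of_nonneg hc0
    have ha' : (an : ℤ) = a := Int.toNat_of_nonneg (by omega)
    have ht' : (tn : ℤ) = t := Int.toNat_of_nonneg ht0
    have hrepc : Rep mz cn (c * mz) := by
      have : ∀ k : ℕ, Rep mz k ((k : ℤ) * mz) := by
        intro k; induction k with
        | zero => exact rep_congr (by norm_num) (rep_zero mz)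
        | succ k ih =>
          have := rep_cons 2 ih
          refine rep_congr ?_ this
          rw [poly_two]; push_cast; ring
      exact rep_congr (by rw [hc']) (this cn)
    have hrepa : Rep mz an (a * (mz - 3)) := by
      have : ∀ k : ℕ, Rep mz k ((k : ℤ) * (mz - 3)) := by
        intro k; induction k with
        | zero => exact rep_congr (by norm_num) (rep_zero mz)
        | succ k ih =>
          have := rep_cons (-1) ih
          refine rep_congr ?_ this
          rw [poly_neg_one]; push_cast; ring
      exact rep_congr (by rw [ha']) (this an)
    have hrept : Rep mz tn (t * 1) := by
      refine rep_congr (by rw [mul_one]) (rep_ones mz tn t ht0 (by rw [ht']))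
    have hcat : Rep mz (cn + an + tn) S := by
      have h := rep_append (rep_append hrepc hrepa) hrept
      exact rep_congr (by rw [hvalue]) h
    have hle : cn + an + tn ≤ m := by
      have hmzm : mz = (m : ℤ) := hmz
      omega
    have hpad : Rep mz m S := by
      have h := rep_append hcat (rep_ones mz (m - (cn + an + tn)) 0 le_rfl (by positivity))
      exact rep_castn (by omega) (rep_congr (by ring) h)
    exact hpad
  · -- large case
    have hq4 : 4 ≤ q := by
      by_contra hq3
      push_neg at hq3
      have h1 : (mz - 2) * q ≤ (mz - 2) * 3 := mul_le_mul_of_nonneg_left (by omega) (by omega)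
      omega
    rcases le_or_gt r (mz - 6) with h1 | h1
    · -- row 1 : K = q, two plain gadgets, T = r
      obtain ⟨A, B, C, D, hK⟩ := Qf_univ_int q hq0
      have h := rep_assemble hm (rep_g0 mz A B) (rep_g0 mz C D) hr0 h1
      refine rep_congr ?_ h
      rw [hS_eq]; linear_combination (mz - 2) * hK
    rcases eq_or_ne r (mz - 5) with h2 | h2
    · -- row 2 : r = mz - 5 : K = q - 2, gadgets (-1, 0), T = 0
      obtain ⟨A, B, C, D, hK⟩ := Qf_univ_int (q - 2) (by omega)
      have h := rep_assemble hm (rep_gm1 mz A B) (rep_g0 mz C D) le_rfl (by omega)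
      refine rep_congr ?_ h
      rw [hS_eq, h2]; linear_combination (mz - 2) * hK
    rcases eq_or_ne r (mz - 4) with h3 | h3
    · -- row 3 : r = mz - 4
      rcases eq_or_lt_of_le hmz6 with hm6 | hm7
      · -- m = 6 : K = q - 1, two (+1)-gadgets, T = 0
        obtain ⟨A, B, C, D, hK⟩ := Qf_univ_int (q - 1) (by omega)
        have h := rep_assemble hm (rep_g1 mz A B) (rep_g1 mz C D) le_rfl (by omega)
        refine rep_congr ?_ h
        rw [hS_eq, h3, ← hm6]; linear_combination 4 * hK
      · -- m ≥ 7 : K = q - 2, gadgets (-1, 0), T = 1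
        obtain ⟨A, B, C, D, hK⟩ := Qf_univ_int (q - 2) (by omega)
        have h := rep_assemble hm (T := 1) (rep_gm1 mz A B) (rep_g0 mz C D) (by norm_num) (by omega)
        refine rep_congr ?_ h
        rw [hS_eq, h3]; linear_combination (mz - 2) * hK
    · -- row 4 : r = mz - 3
      have h4 : r = mz - 3 := by omega
      rcases eq_or_lt_of_le hmz6 with hm6 | hm7
      · -- m = 6 : K = q, gadgets (+1, 0), T = 0
        obtain ⟨A, B, C, D, hK⟩ := Qf_univ_int q hq0
        have h := rep_assemble hm (rep_g1 mz A B) (rep_g0 mz C D) le_rfl (by omega)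
        refine rep_congr ?_ h
        rw [hS_eq, h4, ← hm6]; linear_combination 4 * hK
      rcases eq_or_lt_of_le (by omega : (7:ℤ) ≤ mz) with hm7' | hm8
      · -- m = 7 : K = q - 4, gadgets (-1, -1), T = 0
        obtain ⟨A, B, C, D, hK⟩ := Qf_univ_int (q - 4) (by omega)
        have h := rep_assemble hm (rep_gm1 mz A B) (rep_gm1 mz C D) le_rfl (by omega)
        refine rep_congr ?_ h
        rw [hS_eq, h4, ← hm7']; linear_combination 5 * hK
      · -- m ≥ 8 : K = q - 2, gadgets (-1, 0), T = 2
        obtain ⟨A, B, C, D, hK⟩ := Qf_univ_int (q - 2) (by omega)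
        have h := rep_assemble hm (T := 2) (rep_gm1 mz A B) (rep_g0 mz C D) (by norm_num) (by omega)
        refine rep_congr ?_ h
        rw [hS_eq, h4]; linear_combination (mz - 2) * hK

/-! ### values of generalized polygonal numbers: trichotomy -/

lemma poly_trichotomy {mz : ℤ} (hmz : 6 ≤ mz) (x : ℤ) :
    polygonal mz x = 0 ∨ polygonal mz x = 1 ∨ mz - 3 ≤ polygonal mz x := by
  rcases eq_or_ne x 0 with h0 | h0
  · left; rw [h0, poly_zero]
  rcases eq_or_ne x 1 with h1 | h1
  · right; left; rw [h1, poly_one]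
  right; right
  rw [poly_eq]
  have h2t := two_tri x
  rcases le_or_gt 2 x with h2 | h2
  · have htri : 1 ≤ tri x := by nlinarith
    nlinarith
  · have hx : x ≤ -1 := by omega
    have htri : 1 ≤ tri x := by nlinarith
    have hprod : 0 ≤ x * (x + 1) := by nlinarith
    have htri2 : 0 ≤ tri x + x := by nlinarith
    nlinarith

end AE

/-- Theorem 1 (2), explicit construction: for 1 ≤ ℓ ≤ m - 4, the sum
`∑_{j=1}^{ℓ-1} P_m(x_j) + (ℓ+1)·∑_{j=1}^{m} P_m(y_j) + (2ℓ+1)·P_m(z)` represents every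
nonnegative integer except ℓ. -/
theorem represents_all_except_ell (m ℓ : ℕ) (hm : 6 ≤ m) (hℓ : 1 ≤ ℓ)
    (hℓm : (ℓ : ℤ) ≤ (m : ℤ) - 4) :
    (∀ k : ℤ, 0 ≤ k → k ≠ (ℓ : ℤ) →
      ∃ (x : Fin (ℓ - 1) → ℤ) (y : Fin m → ℤ) (z : ℤ),
        (∑ j, polygonal m (x j)) + ((ℓ : ℤ) + 1) * (∑ j, polygonal m (y j))
          + (2 * (ℓ : ℤ) + 1) * polygonal m z = k) ∧
    ¬ ∃ (x : Fin (ℓ - 1) → ℤ) (y : Fin m → ℤ) (z : ℤ),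
        (∑ j, polygonal m (x j)) + ((ℓ : ℤ) + 1) * (∑ j, polygonal m (y j))
          + (2 * (ℓ : ℤ) + 1) * polygonal m z = (ℓ : ℤ) := by
  have hmz6 : (6 : ℤ) ≤ (m : ℤ) := by exact_mod_cast hm
  constructor
  · intro k hk hkl
    rcases lt_or_gt_of_ne hkl with hlt | hgt
    · -- k < ℓ : use k ones among the x variables
      obtain ⟨x, hx⟩ := AE.rep_ones (m : ℤ) (ℓ - 1) k hk (by omega)
      refine ⟨x, fun _ => 0, 0, ?_⟩
      rw [hx]
      simp [AE.poly_zero]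
    · -- k > ℓ
      have hL1 : (0 : ℤ) < (ℓ : ℤ) + 1 := by positivity
      have hdm := Int.mul_ediv_add_emod k ((ℓ : ℤ) + 1)
      have hr0 : 0 ≤ k % ((ℓ : ℤ) + 1) := Int.emod_nonneg k (by omega)
      have hrlt : k % ((ℓ : ℤ) + 1) < (ℓ : ℤ) + 1 := Int.emod_lt_of_pos k hL1
      set q : ℤ := k / ((ℓ : ℤ) + 1) with hqdef
      set r : ℤ := k % ((ℓ : ℤ) + 1) with hrdef
      have hq0 : 0 ≤ q := Int.ediv_nonneg hk (by omega)
      rcases le_or_gt r ((ℓ : ℤ) - 1) with hsub | hsub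
      · -- r ≤ ℓ - 1
        obtain ⟨x, hx⟩ := AE.rep_ones (m : ℤ) (ℓ - 1) r hr0 (by omega)
        obtain ⟨y, hy⟩ := AE.rep_univ m hm q hq0
        refine ⟨x, y, 0, ?_⟩
        rw [hx, hy, AE.poly_zero]
        linear_combination hdm
      · -- r = ℓ : use z = 1
        have hrl : r = (ℓ : ℤ) := by omega
        have hq1 : 1 ≤ q := by
          by_contra hq1
          push_neg at hq1
          have : ((ℓ : ℤ) + 1) * q ≤ 0 := mul_nonpos_of_nonneg_of_nonpos (by omega) (by omega)
          omega
        obtain ⟨y, hy⟩ := AE.rep_univ m hm (q - 1) (by omega)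
        refine ⟨fun _ => 0, y, 1, ?_⟩
        rw [hy, AE.poly_one]
        simp only [AE.poly_zero]
        rw [Finset.sum_const_zero]
        linear_combination hdm - hrl
  · -- ℓ itself is not represented
    rintro ⟨x, y, z, hsum⟩
    have hm4 : (4 : ℤ) ≤ (m : ℤ) := by omega
    have hxj : ∀ j, 0 ≤ polygonal (m : ℤ) (x j) := fun j => AE.poly_nonneg hm4 (x j)
    have hyj : ∀ j, 0 ≤ polygonal (m : ℤ) (y j) := fun j => AE.poly_nonneg hm4 (y j)
    have hxs : 0 ≤ ∑ j, polygonal (m : ℤ) (x j) := Finset.sum_nonneg fun j _ => hxj j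
    have hys : 0 ≤ ∑ j, polygonal (m : ℤ) (y j) := Finset.sum_nonneg fun j _ => hyj j
    have hz : 0 ≤ polygonal (m : ℤ) z := AE.poly_nonneg hm4 z
    -- the y-sum must be 0
    have hy0 : ∑ j, polygonal (m : ℤ) (y j) = 0 := by
      by_contra hy0
      have h1 : 1 ≤ ∑ j, polygonal (m : ℤ) (y j) := by omega
      have h2 : (ℓ : ℤ) + 1 ≤ ((ℓ : ℤ) + 1) * ∑ j, polygonal (m : ℤ) (y j) := by
        nlinarith
      nlinarith [mul_nonneg (by positivity : (0:ℤ) ≤ 2 * (ℓ : ℤ) + 1) hz]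
    -- the z-term must be 0
    have hz0 : polygonal (m : ℤ) z = 0 := by
      by_contra hz0
      have h1 : 1 ≤ polygonal (m : ℤ) z := by omega
      have h2 : 2 * (ℓ : ℤ) + 1 ≤ (2 * (ℓ : ℤ) + 1) * polygonal (m : ℤ) z := by nlinarith
      nlinarith [mul_nonneg (by positivity : (0:ℤ) ≤ (ℓ : ℤ) + 1) hys]
    rw [hy0, hz0] at hsum
    simp only [mul_zero, add_zero] at hsum
    -- so the x-sum equals ℓ, but each term is 0 or 1
    have hxle : ∀ j, polygonal (m : ℤ) (x j) ≤ 1 := by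
      intro j
      have hle : polygonal (m : ℤ) (x j) ≤ (ℓ : ℤ) := by
        rw [← hsum]
        exact Finset.single_le_sum (fun i _ => hxj i) (Finset.mem_univ j)
      rcases AE.poly_trichotomy hmz6 (x j) with h | h | h <;> omega
    have hsumle : ∑ j, polygonal (m : ℤ) (x j) ≤ (Fintype.card (Fin (ℓ - 1)) : ℤ) * 1 := by
      calc ∑ j, polygonal (m : ℤ) (x j) ≤ ∑ _j : Fin (ℓ - 1), (1 : ℤ) :=
        Finset.sum_le_sum fun j _ => hxle j
      _ = (Fintype.card (Fin (ℓ - 1)) : ℤ) * 1 := by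
        rw [Finset.sum_const]; simp [Finset.card_univ]
    rw [Fintype.card_fin] at hsumle
    rw [hsum] at hsumle
    omega
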